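/- Let H be a finite simple graph, let 𝓕 be a set of 3-patterns, and let H⁺ be the constraint digraph of H with respect to 𝓕. If there exists a circuit contained in a single strong component of H⁺, then H has no 𝓕-free linear ordering of its vertices. -/

import Mathlib

open SimpleGraph

variable {V : Type*}

/-- A `k`-pattern (a graph on vertex set `Fin k`) occurs in `H` under the ordering `lt`:
there are vertices `v 0 < v 1 < ⋯ < v (k-1)` whose induced ordered subgraph is the pattern. -/
def PatOccurs {k : ℕ} (H : SimpleGraph V) (lt : V → V → Prop)
    (F : SimpleGraph (Fin k)) : Prop :=
  ∃ v : Fin k → V, (∀ i j : Fin k, i < j → lt (v i) (v j)) ∧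
    ∀ i j : Fin k, H.Adj (v i) (v j) ↔ F.Adj i j

/-- The ordering `lt` is `𝓕`-free for `H`: no pattern of `𝓕` occurs under it. -/
def FreeOrder {k : ℕ} (H : SimpleGraph V) (𝓕 : Set (SimpleGraph (Fin k)))
    (lt : V → V → Prop) : Prop :=
  ∀ F ∈ 𝓕, ¬ PatOccurs H lt F

/-- `H` admits an `𝓕`-free linear ordering of its vertices. -/
def HasFreeOrdering {k : ℕ} (H : SimpleGraph V)
    (𝓕 : Set (SimpleGraph (Fin k))) : Prop :=
  ∃ lt : V → V → Prop, IsStrictTotalOrder V lt ∧ FreeOrder H 𝓕 lt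

/-- The triple `(x, y, z)`, in this order, induces the 3-pattern `F` in `H`. -/
def Induces3 (H : SimpleGraph V) (F : SimpleGraph (Fin 3)) (x y z : V) : Prop :=
  x ≠ y ∧ x ≠ z ∧ y ≠ z ∧
    (H.Adj x y ↔ F.Adj 0 1) ∧ (H.Adj x z ↔ F.Adj 0 2) ∧ (H.Adj y z ↔ F.Adj 1 2)

/-- The arc relation of the constraint digraph `H⁺` of `H` with respect to `𝓕 ⊆ F_3`:
there is an arc from `(x,y)` to `(z,y)` and an arc from `(y,z)` to `(y,x)` whenever
`x, y, z`, ordered `x < y < z`, induce a forbidden pattern of `𝓕`. -/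
def Arc (H : SimpleGraph V) (𝓕 : Set (SimpleGraph (Fin 3))) :
    V × V → V × V → Prop := fun p q =>
  ∃ x y z : V, (∃ F ∈ 𝓕, Induces3 H F x y z) ∧
    ((p = (x, y) ∧ q = (z, y)) ∨ (p = (y, z) ∧ q = (y, x)))

/-- `p` and `q` lie in the same strong component of the digraph with arc relation `r`. -/
def SameSCC {α : Type*} (r : α → α → Prop) (p q : α) : Prop :=
  Relation.ReflTransGen r p q ∧ Relation.ReflTransGen r q p

/-- `S` is a strong component of the constraint digraph `H⁺`. -/
def IsSCCOf (H : SimpleGraph V) (𝓕 : Set (SimpleGraph (Fin 3)))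
    (S : Set (V × V)) : Prop :=
  ∃ p : V × V, p.1 ≠ p.2 ∧ S = {q | SameSCC (Arc H 𝓕) p q}

/-- `S` contains a circuit `(x_0,x_1), (x_1,x_2), …, (x_{n-1},x_n), (x_n,x_0)` with `n ≥ 1`. -/
def HasCircuitIn {α : Type*} (S : Set (α × α)) : Prop :=
  ∃ n : ℕ, 1 ≤ n ∧ ∃ x : Fin (n + 1) → α, ∀ i : Fin (n + 1), (x i, x (i + 1)) ∈ S

/-- Some strong component of the constraint digraph `H⁺` contains a circuit. -/
def HasSCCCircuit (H : SimpleGraph V) (𝓕 : Set (SimpleGraph (Fin 3))) : Prop :=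
  ∃ S : Set (V × V), IsSCCOf H 𝓕 S ∧ HasCircuitIn S

/-- `H` has an invertible pair: distinct vertices `x, y` with `(x,y)` and `(y,x)` in the
same strong component of `H⁺`. -/
def InvertiblePair (H : SimpleGraph V) (𝓕 : Set (SimpleGraph (Fin 3))) : Prop :=
  ∃ x y : V, x ≠ y ∧ SameSCC (Arc H 𝓕) (x, y) (y, x)

/-- The 3-pattern `{13}`. -/
def P13 : SimpleGraph (Fin 3) := fromEdgeSet {s(0, 2)}
/-- The 3-pattern `{12,23}`. -/
def P12_23 : SimpleGraph (Fin 3) := fromEdgeSet {s(0, 1), s(1, 2)}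
/-- The 3-pattern `{12,13}`. -/
def P12_13 : SimpleGraph (Fin 3) := fromEdgeSet {s(0, 1), s(0, 2)}
/-- The 3-pattern `{13,23}`. -/
def P13_23 : SimpleGraph (Fin 3) := fromEdgeSet {s(0, 2), s(1, 2)}

/-- `𝓕` is nice. -/
def NicePatterns (𝓕 : Set (SimpleGraph (Fin 3))) : Prop :=
  𝓕 = {P13} ∨ 𝓕 = {P12_23} ∨ 𝓕 = {P13, P13_23} ∨ 𝓕 = {P13, P12_13, P13_23}

lemma cycle_absurd {α : Type*} {n : ℕ} (r : α → α → Prop) (hirr : ∀ a, ¬ r a a)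
    (htrans : Transitive r) (x : Fin (n + 1) → α)
    (hx : ∀ i, r (x i) (x (i + 1))) : False := by
  match n with
  | 0 =>
    have h := hx 0
    have e : (0 : Fin 1) + 1 = 0 := Subsingleton.elim _ _
    rw [e] at h
    exact hirr _ h
  | Nat.succ m =>
    have key : ∀ k : ℕ, ∀ hk : k < m + 2, k ≠ 0 →
        Relation.TransGen r (x 0) (x ⟨k, hk⟩) := by
      intro k
      induction k with
      | zero => intro _ h; exact absurd rfl h
      | succ j ih =>
        intro hk _
        have hj : j < m + 2 := Nat.lt_of_succ_lt hk
        have estep : (⟨j, hj⟩ : Fin (m + 2)) + 1 = ⟨j + 1, hk⟩ := by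
          apply Fin.ext
          simp [Fin.add_def, Nat.mod_eq_of_lt hk]
        have hstep : r (x ⟨j, hj⟩) (x ⟨j + 1, hk⟩) := by
          have := hx ⟨j, hj⟩
          rwa [estep] at this
        rcases Nat.eq_zero_or_pos j with hz | hpos
        · subst hz
          have : (⟨0, hj⟩ : Fin (m + 2)) = 0 := rfl
          rw [this] at hstep
          exact Relation.TransGen.single hstep
        · exact (ih hj (Nat.pos_iff_ne_zero.mp hpos)).tail hstep
    have hlast : Relation.TransGen r (x 0) (x ⟨m + 1, by omega⟩) :=
      key (m + 1) (by omega) (by omega)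
    have ewrap : (⟨m + 1, by omega⟩ : Fin (m + 2)) + 1 = 0 := by
      apply Fin.ext
      simp [Fin.add_def]
    have hstep : r (x ⟨m + 1, by omega⟩) (x 0) := by
      have := hx ⟨m + 1, by omega⟩
      rwa [ewrap] at this
    have : Relation.TransGen r (x 0) (x 0) := hlast.tail hstep
    haveI hIT : IsTrans α r := ⟨fun _ _ _ => @htrans _ _ _⟩
    rw [Relation.transGen_eq_self] at this
    exact hirr _ this

lemma arc_ne {H : SimpleGraph V} {𝓕 : Set (SimpleGraph (Fin 3))} {p q : V × V}
    (h : Arc H 𝓕 p q) : q.1 ≠ q.2 := by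
  obtain ⟨x, y, z, ⟨F, hF, hxy, hxz, hyz, _⟩, hc⟩ := h
  rcases hc with ⟨_, rfl⟩ | ⟨_, rfl⟩
  · exact fun e => hyz e.symm
  · exact fun e => hxy e.symm

lemma arc_mono {H : SimpleGraph V} {𝓕 : Set (SimpleGraph (Fin 3))}
    {lt : V → V → Prop} (ht : IsStrictTotalOrder V lt) (hfree : FreeOrder H 𝓕 lt)
    {p q : V × V} (h : Arc H 𝓕 p q) (hp : lt p.1 p.2) : lt q.1 q.2 := by
  haveI := ht
  obtain ⟨x, y, z, ⟨F, hF, hxy, hxz, hyz, h01, h02, h12⟩, hc⟩ := h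
  have nopat : ¬ (lt x y ∧ lt y z) := by
    rintro ⟨hxy', hyz'⟩
    refine hfree F hF ⟨![x, y, z], ?_, ?_⟩
    · intro i j hij
      fin_cases i <;> fin_cases j <;>
        simp_all [Fin.lt_def] <;>
        exact trans_of lt hxy' hyz'
    · intro i j
      fin_cases i <;> fin_cases j <;>
        simp_all [H.adj_comm, adj_comm, SimpleGraph.irrefl] <;>
        exact F.adj_comm _ _
  rcases hc with ⟨rfl, rfl⟩ | ⟨rfl, rfl⟩
  · simp only at hp ⊢
    rcases trichotomous_of lt y z with h' | h' | h'
    · exact absurd ⟨hp, h'⟩ nopat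
    · exact absurd h' hyz
    · exact h'
  · simp only at hp ⊢
    rcases trichotomous_of lt x y with h' | h' | h'
    · exact absurd ⟨h', hp⟩ nopat
    · exact absurd h' hxy
    · exact h'

/-- If there exists a circuit contained in a single strong component of the constraint
digraph `H⁺`, then `H` has no `𝓕`-free ordering. -/
theorem stmt_0 [Fintype V] (H : SimpleGraph V) (𝓕 : Set (SimpleGraph (Fin 3)))
    (h : HasSCCCircuit H 𝓕) : ¬ HasFreeOrdering H 𝓕 := by
  rintro ⟨lt, ht, hfree⟩
  haveI := ht
  obtain ⟨S, ⟨p₀, hp₀, rfl⟩, n, hn, x, hx⟩ := h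
  have mono : ∀ {p q : V × V}, Relation.ReflTransGen (Arc H 𝓕) p q →
      lt p.1 p.2 → lt q.1 q.2 := by
    intro p q hr
    induction hr with
    | refl => exact id
    | tail _ harc ih => exact fun hp => arc_mono ht hfree harc (ih hp)
  have hdist : ∀ i, x i ≠ x (i + 1) := by
    intro i heq
    obtain ⟨h1, _⟩ := hx i
    rcases Relation.ReflTransGen.cases_tail h1 with heq2 | ⟨c, _, harc⟩
    · apply hp₀; rw [← heq2]; exact heq
    · exact arc_ne harc heq
  have hirr : ∀ a, ¬ lt a a := fun a => irrefl_of lt a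
  have htr : Transitive lt := fun _ _ _ hab hbc => trans_of lt hab hbc
  by_cases hg : lt p₀.1 p₀.2
  · exact cycle_absurd lt hirr htr x (fun i => mono (hx i).1 hg)
  · have hbad : ∀ i, lt (x (i + 1)) (x i) := by
      intro i
      rcases trichotomous_of lt (x i) (x (i + 1)) with h' | h' | h'
      · exact absurd (mono (hx i).2 h') hg
      · exact absurd h' (hdist i)
      · exact h'
    refine cycle_absurd lt hirr htr (fun i => x (-i)) (fun i => ?_)
    have := hbad (-(i + 1))
    have e : -(i + 1) + 1 = -i := by rw [neg_add, neg_add_cancel_right]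
    rwa [e] at this
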